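/- Suppose a function f on partial realizations is adaptive submodular with respect to a distribution p(·), i.e., Δ(e|ψ) ≥ Δ(e|ψ′) for all ψ ≼ ψ′ and e ∉ dom(ψ′). Then for any partial realization ψ with f(ψ) < Q and any finite sequence of selections made by an arbitrary policy conditioned on ψ ≼ Φ, the expected total increase E[f(ψ ∪ P∞) − f(ψ) | ψ ≼ Φ] is at most ∑_{e ∈ E \ dom(ψ)} c_e · P(ψ ≼ Φ ∧ e selected | ψ ≼ Φ) · max_{e′} Δ(e′|ψ)/c_{e′}. -/

import Mathlib

namespace Stmt18

variable {E Ω : Type*} [Fintype E] [Fintype Ω] [DecidableEq E] [DecidableEq Ω]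

/-- A full realization `φ : E → Ω` is consistent with the partial realization `ψ`
(written `ψ ≼ φ`) if every observed pair in `ψ` agrees with `φ`. -/
def Consistent (ψ : Finset (E × Ω)) (φ : E → Ω) : Prop := ∀ p ∈ ψ, φ p.1 = p.2

instance (ψ : Finset (E × Ω)) (φ : E → Ω) : Decidable (Consistent ψ φ) := by
  unfold Consistent; infer_instance

/-- Probability that a random full realization (with distribution `pr`) is consistent with `ψ`. -/
def probCons (pr : (E → Ω) → ℝ) (ψ : Finset (E × Ω)) : ℝ :=
  ∑ φ ∈ Finset.univ.filter (Consistent ψ), pr φ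

/-- Conditional expected marginal benefit `Δ(e|ψ)` of item `e` given the partial realization `ψ`. -/
noncomputable def condDelta (pr : (E → Ω) → ℝ) (f : Finset (E × Ω) → ℝ)
    (e : E) (ψ : Finset (E × Ω)) : ℝ :=
  (∑ φ ∈ Finset.univ.filter (Consistent ψ),
      pr φ * (f (insert (e, φ e) ψ) - f ψ)) / probCons pr ψ

/-- The partial realization observed after `n` steps of running the policy `pol` (which maps an
observed partial realization to the next selected item, or `none` to stop) under realization `φ`. -/
def run (pol : Finset (E × Ω) → Option E) (φ : E → Ω) : ℕ → Finset (E × Ω)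
  | 0 => ∅
  | n + 1 =>
    let s := run pol φ n
    match pol s with
    | none => s
    | some e => insert (e, φ e) s

/-- All pairs observed by the policy `pol` under realization `φ` (it selects at most `|E×Ω|`
distinct pairs, so the run stabilizes by that time). -/
def Pinf (pol : Finset (E × Ω) → Option E) (φ : E → Ω) : Finset (E × Ω) :=
  run pol φ (Fintype.card E * Fintype.card Ω + 1)

section aux

variable (pol : Finset (E × Ω) → Option E) (φ : E → Ω)

lemma run_succ (n : ℕ) : run pol φ (n+1) = (match pol (run pol φ n) with
    | none => run pol φ n
    | some e => insert (e, φ e) (run pol φ n)) := rfl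

lemma run_mono : Monotone (run pol φ) := by
  apply monotone_nat_of_le_succ
  intro n
  rw [run_succ]
  cases pol (run pol φ n) with
  | none => exact subset_rfl
  | some e => exact Finset.subset_insert _ _

lemma run_consistent (n : ℕ) : Consistent (run pol φ n) φ := by
  induction n with
  | zero => intro p hp; simp [run] at hp
  | succ n ih =>
    rw [run_succ]
    cases pol (run pol φ n) with
    | none => exact ih
    | some e =>
      intro p hp
      rcases Finset.mem_insert.1 hp with h | h
      · subst h; rfl
      · exact ih p h

lemma run_congr {φ' : E → Ω} {n : ℕ} (h : Consistent (run pol φ n) φ')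
    {k : ℕ} (hk : k ≤ n) : run pol φ' k = run pol φ k := by
  induction k with
  | zero => rfl
  | succ k ih =>
    have hk' : k ≤ n := Nat.le_of_succ_le hk
    rw [run_succ, run_succ, ih hk']
    cases hpol : pol (run pol φ k) with
    | none => rfl
    | some e =>
      have hmem : (e, φ e) ∈ run pol φ n := by
        apply run_mono pol φ hk
        rw [run_succ, hpol]; exact Finset.mem_insert_self _ _
      have hphi : φ' e = φ e := h _ hmem
      simp [hphi]

lemma exists_first {e : E} {ω : Ω} {n : ℕ} (h : (e, ω) ∈ run pol φ n) :
    ∃ i < n, pol (run pol φ i) = some e ∧ ∀ ω', (e, ω') ∉ run pol φ i := by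
  induction n generalizing ω with
  | zero => simp [run] at h
  | succ n ih =>
    by_cases hprev : ∃ ω', (e, ω') ∈ run pol φ n
    · obtain ⟨ω', hω'⟩ := hprev
      obtain ⟨i, hi, h2, h3⟩ := ih hω'
      exact ⟨i, Nat.lt_succ_of_lt hi, h2, h3⟩
    · push_neg at hprev
      rw [run_succ] at h
      cases hpol : pol (run pol φ n) with
      | none => rw [hpol] at h; exact absurd h (hprev ω)
      | some e' =>
        rw [hpol] at h
        rcases Finset.mem_insert.1 h with h' | h'
        · have : e' = e := by injection h' with h1 h2; exact h1.symm
          subst this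
          exact ⟨n, Nat.lt_succ_self n, hpol, hprev⟩
        · exact absurd h' (hprev ω)

end aux

/-- Weight assigned to a history `s`: if the policy selects a fresh item `e` (no outcome of `e`
recorded in `ψ ∪ s`), the weight is `r e`, else `0`. -/
noncomputable def wt (pol : Finset (E × Ω) → Option E) (ψ : Finset (E × Ω)) (r : E → ℝ)
    (s : Finset (E × Ω)) : ℝ :=
  match pol s with
  | none => 0
  | some e => if ∀ ω, (e, ω) ∉ ψ ∪ s then r e else 0

lemma sum_wt (pol : Finset (E × Ω) → Option E) (ψ : Finset (E × Ω)) (r : E → ℝ)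
    (φ : E → Ω) (N : ℕ) :
    ∑ i ∈ Finset.range N, wt pol ψ r (run pol φ i) =
      ∑ e ∈ Finset.univ.filter
          (fun e : E => (∀ ω, (e, ω) ∉ ψ) ∧ ∃ ω, (e, ω) ∈ run pol φ N), r e := by
  induction N with
  | zero =>
    simp [run]
  | succ N ih =>
    rw [Finset.sum_range_succ, ih]
    rcases hpol : pol (run pol φ N) with _ | e
    · have hrun : run pol φ (N + 1) = run pol φ N := by rw [run_succ, hpol]
      have hwt : wt pol ψ r (run pol φ N) = 0 := by unfold wt; rw [hpol]
      rw [hrun, hwt, add_zero]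
    · have hrun : run pol φ (N + 1) = insert (e, φ e) (run pol φ N) := by
        rw [run_succ, hpol]
      by_cases hfresh : ∀ ω, (e, ω) ∉ ψ ∪ run pol φ N
      · have hwt : wt pol ψ r (run pol φ N) = r e := by
          unfold wt; rw [hpol]; exact if_pos hfresh
        have hset : Finset.univ.filter
            (fun e' : E => (∀ ω, (e', ω) ∉ ψ) ∧ ∃ ω, (e', ω) ∈ run pol φ (N + 1)) =
            insert e (Finset.univ.filter
              (fun e' : E => (∀ ω, (e', ω) ∉ ψ) ∧ ∃ ω, (e', ω) ∈ run pol φ N)) := by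
          ext e'
          simp only [Finset.mem_filter, Finset.mem_univ, true_and, Finset.mem_insert, hrun]
          constructor
          · rintro ⟨h1, ω, hω | hω⟩
            · left; exact congrArg Prod.fst hω
            · right; exact ⟨h1, ω, hω⟩
          · rintro (rfl | ⟨h1, ω, hω⟩)
            · exact ⟨fun ω hω => hfresh ω (Finset.mem_union_left _ hω), _, Or.inl rfl⟩
            · exact ⟨h1, ω, Or.inr hω⟩
        have hnotmem : e ∉ Finset.univ.filter
            (fun e' : E => (∀ ω, (e', ω) ∉ ψ) ∧ ∃ ω, (e', ω) ∈ run pol φ N) := by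
          simp only [Finset.mem_filter, Finset.mem_univ, true_and, not_and]
          rintro - ⟨ω, hω⟩
          exact hfresh ω (Finset.mem_union_right _ hω)
        rw [hset, Finset.sum_insert hnotmem, hwt]
        ring
      · have hwt : wt pol ψ r (run pol φ N) = 0 := by
          unfold wt; rw [hpol]; exact if_neg hfresh
        push_neg at hfresh
        obtain ⟨ω₀, hω₀⟩ := hfresh
        have hset : Finset.univ.filter
            (fun e' : E => (∀ ω, (e', ω) ∉ ψ) ∧ ∃ ω, (e', ω) ∈ run pol φ (N + 1)) =
            Finset.univ.filter
              (fun e' : E => (∀ ω, (e', ω) ∉ ψ) ∧ ∃ ω, (e', ω) ∈ run pol φ N) := by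
          ext e'
          simp only [Finset.mem_filter, Finset.mem_univ, true_and, hrun]
          constructor
          · rintro ⟨h1, ω, hω⟩
            refine ⟨h1, ?_⟩
            rcases Finset.mem_insert.1 hω with h | h
            · have he : e' = e := congrArg Prod.fst h
              subst he
              rcases Finset.mem_union.1 hω₀ with h' | h'
              · exact absurd h' (h1 ω₀)
              · exact ⟨ω₀, h'⟩
            · exact ⟨ω, h⟩
          · rintro ⟨h1, ω, hω⟩
            exact ⟨h1, ω, Finset.mem_insert_of_mem hω⟩
        rw [hset, hwt, add_zero]

/-- Core fiber bound. -/
lemma fiber_le (pr : (E → Ω) → ℝ) (hpr0 : ∀ φ, 0 ≤ pr φ) (f : Finset (E × Ω) → ℝ)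
    (r : E → ℝ) (ψ : Finset (E × Ω)) (pol : Finset (E × Ω) → Option E)
    (hr : ∀ e s, (∀ ω, (e, ω) ∉ ψ ∪ s) → condDelta pr f e (ψ ∪ s) ≤ r e)
    (i : ℕ) (s : Finset (E × Ω)) :
    ∑ φ ∈ (Finset.univ.filter (Consistent ψ)).filter (fun φ => run pol φ i = s),
        pr φ * (f (ψ ∪ run pol φ (i + 1)) - f (ψ ∪ run pol φ i)) ≤
      (∑ φ ∈ (Finset.univ.filter (Consistent ψ)).filter (fun φ => run pol φ i = s),
        pr φ) * wt pol ψ r s := by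
  set F := (Finset.univ.filter (Consistent ψ)).filter (fun φ => run pol φ i = s) with hF
  have hFmem : ∀ φ ∈ F, Consistent ψ φ ∧ run pol φ i = s := by
    intro φ hφ
    simp only [hF, Finset.mem_filter, Finset.mem_univ, true_and] at hφ
    exact hφ
  rcases hpol : pol s with _ | e
  · -- policy stops: every increment is zero, weight is zero
    have hwt : wt pol ψ r s = 0 := by unfold wt; rw [hpol]
    rw [hwt, mul_zero]
    apply le_of_eq
    apply Finset.sum_eq_zero
    intro φ hφ
    obtain ⟨-, hrun⟩ := hFmem φ hφ
    have : run pol φ (i + 1) = run pol φ i := by rw [run_succ, hrun, hpol, ← hrun]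
    rw [this, sub_self, mul_zero]
  · by_cases hfresh : ∀ ω, (e, ω) ∉ ψ ∪ s
    · -- fresh selection
      have hwt : wt pol ψ r s = r e := by unfold wt; rw [hpol]; exact if_pos hfresh
      rcases Finset.eq_empty_or_nonempty F with hFe | ⟨φ₀, hφ₀⟩
      · simp [hFe]
      · obtain ⟨hcons₀, hrun₀⟩ := hFmem φ₀ hφ₀
        -- the fiber is exactly the set of realizations consistent with ψ ∪ s
        have hFeq : F = Finset.univ.filter (Consistent (ψ ∪ s)) := by
          ext φ
          simp only [hF, Finset.mem_filter, Finset.mem_univ, true_and]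
          constructor
          · rintro ⟨hcons, hrun⟩
            intro p hp
            rcases Finset.mem_union.1 hp with h | h
            · exact hcons p h
            · rw [← hrun] at h
              exact run_consistent pol φ i p h
          · intro hcons
            have hconsψ : Consistent ψ φ := fun p hp => hcons p (Finset.mem_union_left _ hp)
            have hconss : Consistent s φ := fun p hp => hcons p (Finset.mem_union_right _ hp)
            refine ⟨hconsψ, ?_⟩
            have : Consistent (run pol φ₀ i) φ := by rw [hrun₀]; exact hconss
            rw [run_congr pol φ₀ this le_rfl, hrun₀]
        -- rewrite the increment on the fiber
        have hterm : ∀ φ ∈ F, pr φ * (f (ψ ∪ run pol φ (i + 1)) - f (ψ ∪ run pol φ i)) =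
            pr φ * (f (insert (e, φ e) (ψ ∪ s)) - f (ψ ∪ s)) := by
          intro φ hφ
          obtain ⟨-, hrun⟩ := hFmem φ hφ
          have h1 : run pol φ (i + 1) = insert (e, φ e) s := by rw [run_succ, hrun, hpol]
          rw [h1, hrun, Finset.union_insert]
        rw [Finset.sum_congr rfl hterm, hwt, hFeq]
        have hprob : (∑ φ ∈ Finset.univ.filter (Consistent (ψ ∪ s)), pr φ) =
            probCons pr (ψ ∪ s) := rfl
        rw [hprob]
        rcases eq_or_lt_of_le (Finset.sum_nonneg fun φ _ => hpr0 φ :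
            (0:ℝ) ≤ probCons pr (ψ ∪ s)) with hp0 | hppos
        · -- zero-probability fiber: every term vanishes
          have hall : ∀ φ ∈ Finset.univ.filter (Consistent (ψ ∪ s)), pr φ = 0 := by
            intro φ hφ
            exact (Finset.sum_eq_zero_iff_of_nonneg (fun φ _ => hpr0 φ)).1 hp0.symm φ hφ
          have hp0' : probCons pr (ψ ∪ s) = 0 := hp0.symm
          rw [hp0', zero_mul]
          apply le_of_eq
          apply Finset.sum_eq_zero
          intro φ hφ
          rw [hall φ hφ, zero_mul]
        · have hnum : ∑ φ ∈ Finset.univ.filter (Consistent (ψ ∪ s)),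
              pr φ * (f (insert (e, φ e) (ψ ∪ s)) - f (ψ ∪ s)) =
              condDelta pr f e (ψ ∪ s) * probCons pr (ψ ∪ s) := by
            rw [condDelta, div_mul_cancel₀]
            exact ne_of_gt hppos
          rw [hnum, mul_comm (probCons pr (ψ ∪ s)) (r e)]
          exact mul_le_mul_of_nonneg_right (hr e s hfresh) (le_of_lt hppos)
    · -- the selected item already has a recorded outcome: increment is zero
      have hwt : wt pol ψ r s = 0 := by unfold wt; rw [hpol]; exact if_neg hfresh
      rw [hwt, mul_zero]
      apply le_of_eq
      apply Finset.sum_eq_zero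
      intro φ hφ
      obtain ⟨hcons, hrun⟩ := hFmem φ hφ
      push_neg at hfresh
      obtain ⟨ω₀, hω₀⟩ := hfresh
      have hφe : (e, φ e) ∈ ψ ∪ s := by
        rcases Finset.mem_union.1 hω₀ with h | h
        · have : φ e = ω₀ := hcons _ h
          rw [this]; exact Finset.mem_union_left _ h
        · have : φ e = ω₀ := by
            have := run_consistent pol φ i (e, ω₀) (by rw [hrun]; exact h)
            exact this
          rw [this]; exact Finset.mem_union_right _ h
      have h1 : run pol φ (i + 1) = insert (e, φ e) s := by rw [run_succ, hrun, hpol]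
      have h2 : ψ ∪ run pol φ (i + 1) = ψ ∪ run pol φ i := by
        rw [h1, hrun, Finset.union_insert, Finset.insert_eq_self.2 hφe]
      rw [h2, sub_self, mul_zero]

/-- If `f` is adaptive submodular w.r.t. `pr`, then for any partial realization `ψ` with
`f(ψ) < Q` and any policy, the expected total increase `E[f(ψ ∪ P∞) − f(ψ) | ψ ≼ Φ]` is
at most `∑_{e ∉ dom(ψ)} c_e · P(e selected | ψ ≼ Φ) · max_{e'} Δ(e'|ψ)/c_{e'}`. -/
theorem stmt_18 [Nonempty E] (pr : (E → Ω) → ℝ) (hpr0 : ∀ φ, 0 ≤ pr φ)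
    (hpr1 : ∑ φ : E → Ω, pr φ = 1)
    (f : Finset (E × Ω) → ℝ) (c : E → ℝ) (hc : ∀ e, 0 < c e) (Q : ℝ)
    (hAS : ∀ ψ ψ' : Finset (E × Ω), ψ ⊆ ψ' → ∀ e : E, (∀ ω : Ω, (e, ω) ∉ ψ') →
      condDelta pr f e ψ' ≤ condDelta pr f e ψ)
    (ψ : Finset (E × Ω)) (hfQ : f ψ < Q) (hψ : 0 < probCons pr ψ)
    (pol : Finset (E × Ω) → Option E) :
    (∑ φ ∈ Finset.univ.filter (Consistent ψ),
        pr φ * (f (ψ ∪ Pinf pol φ) - f ψ)) / probCons pr ψ ≤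
      ∑ e ∈ Finset.univ.filter (fun e : E => ∀ ω : Ω, (e, ω) ∉ ψ),
        c e *
          ((∑ φ ∈ Finset.univ.filter
              (fun φ => Consistent ψ φ ∧ ∃ ω : Ω, (e, ω) ∈ Pinf pol φ), pr φ) /
            probCons pr ψ) *
          (Finset.univ.sup' Finset.univ_nonempty (fun e' : E => condDelta pr f e' ψ / c e')) := by
  classical
  set M : ℝ := Finset.univ.sup' Finset.univ_nonempty
      (fun e' : E => condDelta pr f e' ψ / c e') with hMdef
  set r : E → ℝ := fun e => c e * M with hrdef
  have hrM : ∀ e, condDelta pr f e ψ ≤ r e := by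
    intro e
    have h := Finset.le_sup' (fun e' : E => condDelta pr f e' ψ / c e') (Finset.mem_univ e)
    rw [← hMdef] at h
    have h2 := (div_le_iff₀ (hc e)).1 h
    rw [hrdef]
    simpa [mul_comm] using h2
  have hr : ∀ e s, (∀ ω, (e, ω) ∉ ψ ∪ s) → condDelta pr f e (ψ ∪ s) ≤ r e := by
    intro e s h
    exact (hAS ψ (ψ ∪ s) Finset.subset_union_left e h).trans (hrM e)
  have htel : ∀ φ : E → Ω, f (ψ ∪ Pinf pol φ) - f ψ =
      ∑ i ∈ Finset.range (Fintype.card E * Fintype.card Ω + 1),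
        (f (ψ ∪ run pol φ (i + 1)) - f (ψ ∪ run pol φ i)) := by
    intro φ
    rw [Finset.sum_range_sub (fun i => f (ψ ∪ run pol φ i))]
    have h0 : run pol φ 0 = ∅ := rfl
    rw [h0, Finset.union_empty]
    rfl
  have key : (∑ φ ∈ Finset.univ.filter (Consistent ψ), pr φ * (f (ψ ∪ Pinf pol φ) - f ψ)) ≤
      ∑ e ∈ Finset.univ.filter (fun e : E => ∀ ω : Ω, (e, ω) ∉ ψ),
        (∑ φ ∈ Finset.univ.filter
            (fun φ => Consistent ψ φ ∧ ∃ ω : Ω, (e, ω) ∈ Pinf pol φ), pr φ) * r e := by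
    calc ∑ φ ∈ Finset.univ.filter (Consistent ψ), pr φ * (f (ψ ∪ Pinf pol φ) - f ψ)
        = ∑ φ ∈ Finset.univ.filter (Consistent ψ),
            ∑ i ∈ Finset.range (Fintype.card E * Fintype.card Ω + 1),
              pr φ * (f (ψ ∪ run pol φ (i + 1)) - f (ψ ∪ run pol φ i)) := by
          refine Finset.sum_congr rfl fun φ _ => ?_
          rw [htel φ, Finset.mul_sum]
      _ = ∑ i ∈ Finset.range (Fintype.card E * Fintype.card Ω + 1),
            ∑ φ ∈ Finset.univ.filter (Consistent ψ),
              pr φ * (f (ψ ∪ run pol φ (i + 1)) - f (ψ ∪ run pol φ i)) := Finset.sum_comm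
      _ ≤ ∑ i ∈ Finset.range (Fintype.card E * Fintype.card Ω + 1),
            ∑ φ ∈ Finset.univ.filter (Consistent ψ), pr φ * wt pol ψ r (run pol φ i) := by
          refine Finset.sum_le_sum fun i _ => ?_
          rw [← Finset.sum_fiberwise_of_maps_to
                (fun φ _ => Finset.mem_univ (run pol φ i))
                (fun φ => pr φ * (f (ψ ∪ run pol φ (i + 1)) - f (ψ ∪ run pol φ i))),
              ← Finset.sum_fiberwise_of_maps_to
                (fun φ _ => Finset.mem_univ (run pol φ i))
                (fun φ => pr φ * wt pol ψ r (run pol φ i))]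
          refine Finset.sum_le_sum fun s _ => ?_
          refine le_trans (fiber_le pr hpr0 f r ψ pol hr i s) (le_of_eq ?_)
          rw [Finset.sum_mul]
          refine Finset.sum_congr rfl fun φ hφ => ?_
          have hrun : run pol φ i = s := (Finset.mem_filter.1 hφ).2
          rw [hrun]
      _ = ∑ φ ∈ Finset.univ.filter (Consistent ψ),
            pr φ * ∑ e ∈ Finset.univ.filter
              (fun e : E => (∀ ω, (e, ω) ∉ ψ) ∧ ∃ ω, (e, ω) ∈ Pinf pol φ), r e := by
          rw [Finset.sum_comm]
          refine Finset.sum_congr rfl fun φ _ => ?_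
          rw [← Finset.mul_sum, sum_wt]
          rfl
      _ = ∑ φ ∈ Finset.univ.filter (Consistent ψ),
            ∑ e ∈ Finset.univ.filter (fun e : E => ∀ ω, (e, ω) ∉ ψ),
              if ∃ ω, (e, ω) ∈ Pinf pol φ then pr φ * r e else 0 := by
          refine Finset.sum_congr rfl fun φ _ => ?_
          rw [Finset.mul_sum, ← Finset.filter_filter, Finset.sum_filter]
      _ = ∑ e ∈ Finset.univ.filter (fun e : E => ∀ ω, (e, ω) ∉ ψ),
            ∑ φ ∈ Finset.univ.filter (Consistent ψ),
              if ∃ ω, (e, ω) ∈ Pinf pol φ then pr φ * r e else 0 := Finset.sum_comm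
      _ = ∑ e ∈ Finset.univ.filter (fun e : E => ∀ ω : Ω, (e, ω) ∉ ψ),
            (∑ φ ∈ Finset.univ.filter
              (fun φ => Consistent ψ φ ∧ ∃ ω : Ω, (e, ω) ∈ Pinf pol φ), pr φ) * r e := by
          refine Finset.sum_congr rfl fun e _ => ?_
          rw [← Finset.sum_filter, Finset.filter_filter, Finset.sum_mul]
  have hfinal : ∑ e ∈ Finset.univ.filter (fun e : E => ∀ ω : Ω, (e, ω) ∉ ψ),
      c e * ((∑ φ ∈ Finset.univ.filter
          (fun φ => Consistent ψ φ ∧ ∃ ω : Ω, (e, ω) ∈ Pinf pol φ), pr φ) /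
        probCons pr ψ) * M =
      (∑ e ∈ Finset.univ.filter (fun e : E => ∀ ω : Ω, (e, ω) ∉ ψ),
        (∑ φ ∈ Finset.univ.filter
            (fun φ => Consistent ψ φ ∧ ∃ ω : Ω, (e, ω) ∈ Pinf pol φ), pr φ) * r e) /
      probCons pr ψ := by
    rw [Finset.sum_div]
    refine Finset.sum_congr rfl fun e _ => ?_
    rw [hrdef]
    ring
  rw [hfinal]
  exact (div_le_div_iff_of_pos_right hψ).2 key

end Stmt18
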